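/- Let B be a real p×q matrix and n ≥ 1. Suppose x ∈ ℝ^p and y ∈ ℝ^q are not both zero and λ ∈ ℝ is such that C · v = λ · v, where v is the vector indexed by Fin p ⊕ (Fin n × Fin q) with v(inl i) = x i and v(inr (k,j)) = y j for all k. Then n − 1 − λ is an eigenvalue of D; specifically, the nonzero vector w indexed by Fin q ⊕ (Fin n × Fin p) with w(inl j) = y j and w(inr (k,i)) = −x i / n satisfies D · w = (n − 1 − λ) · w. -/
import Mathlib


open Matrix

/-- The matrix `C` of Construction III: indexed by `Fin p ⊕ (Fin n × Fin q)`,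
first block row `[0, B, …, B]`, and the `n×n` grid of `q×q` blocks has zero diagonal blocks
and identity blocks `I_q` off the diagonal. -/
def matC3 (p q n : ℕ) (B : Matrix (Fin p) (Fin q) ℝ) :
    Matrix (Fin p ⊕ Fin n × Fin q) (Fin p ⊕ Fin n × Fin q) ℝ :=
  Matrix.of fun a b =>
    match a, b with
    | Sum.inl i, Sum.inr (_, j) => B i j
    | Sum.inr (_, j), Sum.inl i => B i j
    | Sum.inr (k, j), Sum.inr (k', j') => if k ≠ k' ∧ j = j' then 1 else 0
    | _, _ => 0

/-- The matrix `D` of Construction III: indexed by `Fin q ⊕ (Fin n × Fin p)`,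
first block row `[0, Bᵀ, …, Bᵀ]`, and the `n×n` grid of `p×p` blocks has zero diagonal blocks
and identity blocks `I_p` off the diagonal. -/
def matD3 (p q n : ℕ) (B : Matrix (Fin p) (Fin q) ℝ) :
    Matrix (Fin q ⊕ Fin n × Fin p) (Fin q ⊕ Fin n × Fin p) ℝ :=
  Matrix.of fun a b =>
    match a, b with
    | Sum.inl j, Sum.inr (_, i) => B i j
    | Sum.inr (_, i), Sum.inl j => B i j
    | Sum.inr (k, i), Sum.inr (k', i') => if k ≠ k' ∧ i = i' then 1 else 0
    | _, _ => 0

/-- If `(x, y, …, y)` (not zero) is an eigenvector of `C` with eigenvalue `λ`, then the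
nonzero vector `(y, −x/n, …, −x/n)` is an eigenvector of `D` with eigenvalue `n − 1 − λ`. -/
theorem matC3_eigenvalue_implies_matD3 (p q n : ℕ) (hn : 1 ≤ n)
    (B : Matrix (Fin p) (Fin q) ℝ) (x : Fin p → ℝ) (y : Fin q → ℝ) (l : ℝ)
    (hxy : ¬(x = 0 ∧ y = 0))
    (hev : matC3 p q n B *ᵥ Sum.elim x (fun kj => y kj.2) =
      l • Sum.elim x (fun kj => y kj.2)) :
    (Sum.elim y (fun ki => -x ki.2 / n) : Fin q ⊕ Fin n × Fin p → ℝ) ≠ 0 ∧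
      matD3 p q n B *ᵥ Sum.elim y (fun ki => -x ki.2 / n) =
        ((n : ℝ) - 1 - l) • Sum.elim y (fun ki => -x ki.2 / n) := by
  have hn0 : (n:ℝ) ≠ 0 := Nat.cast_ne_zero.mpr (by omega)
  have h1 : ∀ i, (n:ℝ) * ∑ j, B i j * y j = l * x i := by
    intro i
    have := congrFun hev (Sum.inl i)
    simpa [matC3, mulVec, dotProduct, Fintype.sum_sum_type, Fintype.sum_prod_type,
      Finset.sum_const] using this
  have h2 : ∀ j, (∑ i, B i j * x i) + ((n:ℝ)-1) * y j = l * y j := by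
    intro j
    have H := congrFun hev (Sum.inr (⟨0, hn⟩, j))
    simp only [matC3, mulVec, dotProduct, Fintype.sum_sum_type, Fintype.sum_prod_type,
      Matrix.of_apply, Sum.elim_inl, Sum.elim_inr, Pi.smul_apply, smul_eq_mul,
      ite_and, ite_mul, one_mul, zero_mul, mul_zero, Finset.sum_const_zero, add_zero,
      ne_eq, ite_not] at H
    have hs2 : ∑ k' : Fin n, ∑ j' : Fin q,
        (if (⟨0, hn⟩ : Fin n) = k' then (0:ℝ) else if j = j' then y j' else 0)
        = ∑ k' : Fin n, (if (⟨0, hn⟩ : Fin n) = k' then (0:ℝ) else y j) := by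
      refine Finset.sum_congr rfl fun k' _ => ?_
      split
      · simp
      · simp [Finset.sum_ite_eq]
    have hs : ∑ k' : Fin n, (if (⟨0, hn⟩ : Fin n) = k' then (0:ℝ) else y j)
        = ((n:ℝ)-1) * y j := by
      have e : ∀ k' : Fin n, (if (⟨0, hn⟩ : Fin n) = k' then (0:ℝ) else y j)
          = y j - (if (⟨0, hn⟩ : Fin n) = k' then y j else 0) := by
        intro k'; split <;> ring
      simp [e, Finset.sum_sub_distrib, Finset.sum_ite_eq, Finset.sum_const]
      ring
    rw [hs2, hs] at H
    exact H
  constructor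
  · intro h0
    have hy : y = 0 := by
      funext j; exact congrFun h0 (Sum.inl j)
    have hx : x = 0 := by
      funext i
      have h := congrFun h0 (Sum.inr (⟨0, hn⟩, i))
      simp only [Sum.elim_inr, Pi.zero_apply, div_eq_zero_iff, neg_eq_zero] at h
      rcases h with h | h
      · exact h
      · exact absurd h hn0
    exact hxy ⟨hx, hy⟩
  · funext a
    cases a with
    | inl j =>
      simp only [matD3, mulVec, dotProduct, Fintype.sum_sum_type, Fintype.sum_prod_type,
        Matrix.of_apply, Sum.elim_inl, Sum.elim_inr, Pi.smul_apply, smul_eq_mul,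
        mul_zero, zero_mul, Finset.sum_const_zero, zero_add, Finset.sum_const,
        Finset.card_univ, Fintype.card_fin, nsmul_eq_mul]
      have e : ∑ i, B i j * (-x i / n) = (-∑ i, B i j * x i)/n := by
        rw [← Finset.sum_neg_distrib, Finset.sum_div]
        exact Finset.sum_congr rfl fun i _ => by ring
      rw [e, mul_comm, div_mul_cancel₀ _ hn0]
      linarith [h2 j]
    | inr ki =>
      obtain ⟨k, i⟩ := ki
      simp only [matD3, mulVec, dotProduct, Fintype.sum_sum_type, Fintype.sum_prod_type,
        Matrix.of_apply, Sum.elim_inl, Sum.elim_inr, Pi.smul_apply, smul_eq_mul,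
        ite_and, ite_mul, one_mul, zero_mul, mul_zero, Finset.sum_const_zero, add_zero,
        ne_eq, ite_not]
      have hs2 : ∑ k' : Fin n, ∑ i' : Fin p,
          (if k = k' then (0:ℝ) else if i = i' then -x i' / n else 0)
          = ∑ k' : Fin n, (if k = k' then (0:ℝ) else -x i / n) := by
        refine Finset.sum_congr rfl fun k' _ => ?_
        split
        · simp
        · simp [Finset.sum_ite_eq]
      have hs : ∑ k' : Fin n, (if k = k' then (0:ℝ) else -x i / n)
          = ((n:ℝ)-1) * (-x i / n) := by
        have e : ∀ k' : Fin n, (if k = k' then (0:ℝ) else -x i / n)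
            = -x i / n - (if k = k' then -x i / n else 0) := by
          intro k'; split <;> ring
        simp [e, Finset.sum_sub_distrib, Finset.sum_ite_eq, Finset.sum_const]
        ring
      rw [hs2, hs]
      have hS : ∑ j, B i j * y j = l * x i / n := by
        rw [eq_div_iff hn0]; linarith [h1 i]
      rw [hS]
      ring
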